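/- Fix n ≥ 3 and let R = ℚ[x,y,z]/I with I generated by x^{n-2} - y², y² - z², (x-1)(y-1), (x-1)(z-1), (y-1)(z-1). Let T = x + y + z - x^{n-2} - 1 and L = x^{n-2} in R. Then T · ((y+z)/2 - 1) = -((y+z)/2 - 1) + (L - 1) in R. -/
import Mathlib


open MvPolynomial in
theorem monodromy_eps21 (n : ℕ) (hn : 3 ≤ n) :
    let I : Ideal (MvPolynomial (Fin 3) ℚ) :=
      Ideal.span {X 0 ^ (n - 2) - X 1 ^ 2, X 1 ^ 2 - X 2 ^ 2,
        (X 0 - 1) * (X 1 - 1), (X 0 - 1) * (X 2 - 1), (X 1 - 1) * (X 2 - 1)}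
    Ideal.Quotient.mk I (X 0 + X 1 + X 2 - X 0 ^ (n - 2) - 1) *
        Ideal.Quotient.mk I (C (1 / 2 : ℚ) * (X 1 + X 2) - 1)
      = - Ideal.Quotient.mk I (C (1 / 2 : ℚ) * (X 1 + X 2) - 1)
        + (Ideal.Quotient.mk I (X 0 ^ (n - 2)) - 1) := by
  intro I
  have h1 : (X 0 ^ (n - 2) - X 1 ^ 2 : MvPolynomial (Fin 3) ℚ) ∈ I :=
    Ideal.subset_span (by simp)
  have h2 : (X 1 ^ 2 - X 2 ^ 2 : MvPolynomial (Fin 3) ℚ) ∈ I :=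
    Ideal.subset_span (by simp)
  have h3 : ((X 0 - 1) * (X 1 - 1) : MvPolynomial (Fin 3) ℚ) ∈ I :=
    Ideal.subset_span (by simp)
  have h4 : ((X 0 - 1) * (X 2 - 1) : MvPolynomial (Fin 3) ℚ) ∈ I :=
    Ideal.subset_span (by simp)
  have h5 : ((X 1 - 1) * (X 2 - 1) : MvPolynomial (Fin 3) ℚ) ∈ I :=
    Ideal.subset_span (by simp)
  set S : MvPolynomial (Fin 3) ℚ := ∑ i ∈ Finset.range (n - 2), X 0 ^ i with hSdef
  have hgs := geom_sum_mul (X 0 : MvPolynomial (Fin 3) ℚ) (n - 2)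
  rw [← hSdef] at hgs
  have hS : (X 0 : MvPolynomial (Fin 3) ℚ) ^ (n - 2) = (X 0 - 1) * S + 1 := by
    linear_combination -hgs
  -- the key polynomial identity (cleared of the constant 1/2)
  have key : (X 0 + X 1 + X 2 - X 0 ^ (n - 2) - 1) * (X 1 + X 2 - 2)
        + (X 1 + X 2 - 2) - 2 * ((X 0 : MvPolynomial (Fin 3) ℚ) ^ (n - 2) - 1)
      = (-2 : MvPolynomial (Fin 3) ℚ) * (X 0 ^ (n - 2) - X 1 ^ 2)
        + (-1) * (X 1 ^ 2 - X 2 ^ 2)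
        + (1 - S) * ((X 0 - 1) * (X 1 - 1)) + (1 - S) * ((X 0 - 1) * (X 2 - 1))
        + 2 * ((X 1 - 1) * (X 2 - 1)) := by
    rw [hS]; ring
  have memL : (X 0 + X 1 + X 2 - X 0 ^ (n - 2) - 1) * (X 1 + X 2 - 2)
        + (X 1 + X 2 - 2) - 2 * ((X 0 : MvPolynomial (Fin 3) ℚ) ^ (n - 2) - 1) ∈ I := by
    rw [key]
    exact add_mem (add_mem (add_mem (add_mem (Ideal.mul_mem_left _ _ h1)
      (Ideal.mul_mem_left _ _ h2)) (Ideal.mul_mem_left _ _ h3))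
      (Ideal.mul_mem_left _ _ h4)) (Ideal.mul_mem_left _ _ h5)
  have h2c : (2 : MvPolynomial (Fin 3) ℚ) * C (1 / 2 : ℚ) = 1 := by
    rw [show (2 : MvPolynomial (Fin 3) ℚ) = C 2 from (map_ofNat C 2).symm, ← C_mul]
    norm_num
  have hfac : (X 0 + X 1 + X 2 - X 0 ^ (n - 2) - 1) * (C (1 / 2 : ℚ) * (X 1 + X 2) - 1)
      - (-(C (1 / 2 : ℚ) * (X 1 + X 2) - 1) + ((X 0 : MvPolynomial (Fin 3) ℚ) ^ (n - 2) - 1))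
      = C (1 / 2 : ℚ) * ((X 0 + X 1 + X 2 - X 0 ^ (n - 2) - 1) * (X 1 + X 2 - 2)
        + (X 1 + X 2 - 2) - 2 * ((X 0 : MvPolynomial (Fin 3) ℚ) ^ (n - 2) - 1)) := by
    linear_combination ((X 0 : MvPolynomial (Fin 3) ℚ) + X 1 + X 2 - 1) * h2c
  rw [← map_mul,
    show - Ideal.Quotient.mk I (C (1 / 2 : ℚ) * (X 1 + X 2) - 1)
        + (Ideal.Quotient.mk I (X 0 ^ (n - 2)) - 1)
      = Ideal.Quotient.mk I (-(C (1 / 2 : ℚ) * (X 1 + X 2) - 1) + (X 0 ^ (n - 2) - 1)) by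
      simp only [map_add, map_neg, map_sub, map_one]]
  refine Ideal.Quotient.eq.mpr ?_
  rw [hfac]
  exact Ideal.mul_mem_left _ _ memL
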